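/- Let n ≥ 6 and let V = {S ∈ Matₙ(ℂ) : Sᵀ = −S} be the space of skew-symmetric n×n complex matrices, with the representation ρ : Matₙ(ℂ) → End(V) given by ρ(A)S = AS + S·Aᵀ (the natural action of gl(n,ℂ) on Λ²ℂⁿ). If R : V × V → Matₙ(ℂ) is a symmetric bilinear map such that ρ(R(X,Y))Z + ρ(R(Y,Z))X + ρ(R(Z,X))Y = 0 for all X, Y, Z ∈ V, then tr(R(X,Y)) = 0 for all X, Y ∈ V. (Equivalently, 𝓡̄(gl(n,ℂ) acting on Λ²ℂⁿ) = 𝓡̄(sl(n,ℂ)).) -/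

import Mathlib

open Matrix
/-- The space `Λ²ℂⁿ` of skew-symmetric `n × n` complex matrices. -/
noncomputable def skewMat (n : ℕ) : Submodule ℂ (Matrix (Fin n) (Fin n) ℂ) where
  carrier := {S | Sᵀ = -S}
  add_mem' := by
    intro a b ha hb
    simp only [Set.mem_setOf_eq] at *
    rw [Matrix.transpose_add, ha, hb, neg_add]
  zero_mem' := by
    simp only [Set.mem_setOf_eq, Matrix.transpose_zero, neg_zero]
  smul_mem' := by
    intro c a ha
    simp only [Set.mem_setOf_eq] at *
    rw [Matrix.transpose_smul, ha, smul_neg]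

noncomputable def Fm {n : ℕ} (u v : Fin n) : Matrix (Fin n) (Fin n) ℂ :=
  Matrix.single u v 1 - Matrix.single v u 1

lemma Fm_transpose {n : ℕ} (u v : Fin n) : (Fm u v)ᵀ = -(Fm u v) := by
  ext p q
  simp only [Fm, Matrix.transpose_apply, Matrix.sub_apply, Matrix.neg_apply, Matrix.single,
    Matrix.of_apply]
  by_cases h1 : u = q <;> by_cases h2 : v = p <;> by_cases h3 : v = q <;> by_cases h4 : u = p <;>
    simp [h1, h2, h3, h4, and_comm]

lemma Fm_swap {n : ℕ} (u v : Fin n) : Fm v u = -(Fm u v) := by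
  simp [Fm]

lemma Fm_same {n : ℕ} (u : Fin n) : Fm u u = 0 := by simp [Fm]

lemma mul_Fm_apply {n : ℕ} (M : Matrix (Fin n) (Fin n) ℂ) (u v p q : Fin n) :
    (M * Fm u v) p q = (if q = v then M p u else 0) - (if q = u then M p v else 0) := by
  rw [Fm, mul_sub, Matrix.sub_apply]
  congr 1
  · by_cases h : q = v
    · subst h; rw [if_pos rfl, Matrix.mul_single_apply_same, mul_one]
    · rw [if_neg h, Matrix.mul_single_apply_of_ne _ _ _ p q h]
  · by_cases h : q = u
    · subst h; rw [if_pos rfl, Matrix.mul_single_apply_same, mul_one]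
    · rw [if_neg h, Matrix.mul_single_apply_of_ne _ _ _ p q h]

lemma Fm_mul_apply {n : ℕ} (M : Matrix (Fin n) (Fin n) ℂ) (u v p q : Fin n) :
    (Fm u v * M) p q = (if p = u then M v q else 0) - (if p = v then M u q else 0) := by
  rw [Fm, sub_mul, Matrix.sub_apply]
  congr 1
  · by_cases h : p = u
    · subst h; rw [if_pos rfl, Matrix.single_mul_apply_same, one_mul]
    · rw [if_neg h, Matrix.single_mul_apply_of_ne _ _ _ p q h]
  · by_cases h : p = v
    · subst h; rw [if_pos rfl, Matrix.single_mul_apply_same, one_mul]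
    · rw [if_neg h, Matrix.single_mul_apply_of_ne _ _ _ p q h]

noncomputable def Fs {n : ℕ} (u v : Fin n) : skewMat n :=
  ⟨Fm u v, by
    show (Fm u v)ᵀ = -(Fm u v)
    exact Fm_transpose u v⟩

@[simp] lemma Fs_coe {n : ℕ} (u v : Fin n) : ((Fs u v : skewMat n) : Matrix (Fin n) (Fin n) ℂ) = Fm u v := rfl

lemma Fs_swap {n : ℕ} (u v : Fin n) : Fs v u = -(Fs u v) := by
  apply Subtype.ext
  show Fm v u = -(Fm u v)
  exact Fm_swap u v

lemma Fs_same {n : ℕ} (u : Fin n) : Fs u u = 0 := by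
  apply Subtype.ext
  show Fm u u = 0
  exact Fm_same u

/-- entry of `ρ(A)(F u v)` -/
lemma rho_apply {n : ℕ} (A : Matrix (Fin n) (Fin n) ℂ) (u v p q : Fin n) :
    (A * Fm u v + Fm u v * Aᵀ) p q =
      ((if q = v then A p u else 0) - (if q = u then A p v else 0))
      + ((if p = u then A q v else 0) - (if p = v then A q u else 0)) := by
  rw [Matrix.add_apply, mul_Fm_apply, Fm_mul_apply]
  simp [Matrix.transpose_apply]

section main
variable {n : ℕ} (R : skewMat n →ₗ[ℂ] skewMat n →ₗ[ℂ] Matrix (Fin n) (Fin n) ℂ)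

/-- Entry form of the Bianchi identity at basis elements. -/
lemma bianchiE
    (hB : ∀ X Y Z : skewMat n,
      (R X Y * (Z : Matrix (Fin n) (Fin n) ℂ) + (Z : Matrix (Fin n) (Fin n) ℂ) * (R X Y)ᵀ)
      + (R Y Z * (X : Matrix (Fin n) (Fin n) ℂ) + (X : Matrix (Fin n) (Fin n) ℂ) * (R Y Z)ᵀ)
      + (R Z X * (Y : Matrix (Fin n) (Fin n) ℂ) + (Y : Matrix (Fin n) (Fin n) ℂ) * (R Z X)ᵀ)
      = 0)
    (a b c d u v p q : Fin n) :
    (((if q = v then (R (Fs a b) (Fs c d)) p u else 0) - (if q = u then (R (Fs a b) (Fs c d)) p v else 0))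
      + ((if p = u then (R (Fs a b) (Fs c d)) q v else 0) - (if p = v then (R (Fs a b) (Fs c d)) q u else 0)))
    + (((if q = b then (R (Fs c d) (Fs u v)) p a else 0) - (if q = a then (R (Fs c d) (Fs u v)) p b else 0))
      + ((if p = a then (R (Fs c d) (Fs u v)) q b else 0) - (if p = b then (R (Fs c d) (Fs u v)) q a else 0)))
    + (((if q = d then (R (Fs u v) (Fs a b)) p c else 0) - (if q = c then (R (Fs u v) (Fs a b)) p d else 0))
      + ((if p = c then (R (Fs u v) (Fs a b)) q d else 0) - (if p = d then (R (Fs u v) (Fs a b)) q c else 0)))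
    = 0 := by
  have h := hB (Fs a b) (Fs c d) (Fs u v)
  simp only [Fs_coe] at h
  have h2 : ((R (Fs a b) (Fs c d) * (Fm u v) + (Fm u v) * (R (Fs a b) (Fs c d))ᵀ)
      + (R (Fs c d) (Fs u v) * (Fm a b) + (Fm a b) * (R (Fs c d) (Fs u v))ᵀ)
      + (R (Fs u v) (Fs a b) * (Fm c d) + (Fm c d) * (R (Fs u v) (Fs a b))ᵀ)) p q
      = (0 : Matrix (Fin n) (Fin n) ℂ) p q := by rw [h]
  rw [Matrix.add_apply, Matrix.add_apply, rho_apply, rho_apply, rho_apply] at h2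
  simpa using h2

def HS (R : skewMat n →ₗ[ℂ] skewMat n →ₗ[ℂ] Matrix (Fin n) (Fin n) ℂ) : Prop :=
  ∀ X Y : skewMat n, R X Y = R Y X

def HBi (R : skewMat n →ₗ[ℂ] skewMat n →ₗ[ℂ] Matrix (Fin n) (Fin n) ℂ) : Prop :=
  ∀ X Y Z : skewMat n,
      (R X Y * (Z : Matrix (Fin n) (Fin n) ℂ) + (Z : Matrix (Fin n) (Fin n) ℂ) * (R X Y)ᵀ)
      + (R Y Z * (X : Matrix (Fin n) (Fin n) ℂ) + (X : Matrix (Fin n) (Fin n) ℂ) * (R Y Z)ᵀ)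
      + (R Z X * (Y : Matrix (Fin n) (Fin n) ℂ) + (Y : Matrix (Fin n) (Fin n) ℂ) * (R Z X)ᵀ)
      = 0

/-- Fresh-pair diagonal relation. -/
lemma pair_diag (hB : HBi R) (a b c d e f : Fin n) (hef : e ≠ f)
    (hea : e ≠ a) (heb : e ≠ b) (hec : e ≠ c) (hed : e ≠ d)
    (hfa : f ≠ a) (hfb : f ≠ b) (hfc : f ≠ c) (hfd : f ≠ d) :
    (R (Fs a b) (Fs c d)) e e + (R (Fs a b) (Fs c d)) f f = 0 := by
  have h := bianchiE R hB a b c d e f e f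
  simp only [hef, hef.symm, hea, heb, hec, hed, hfa, hfb, hfc, hfd,
    if_true, if_false, eq_self_iff_true, ite_true, ite_false, ne_eq, false_and, and_false,
    sub_zero, zero_sub, add_zero, zero_add] at h
  linear_combination h

/-- Support-pair diagonal relation, disjoint case. -/
lemma diagXX (hsymm : HS R) (hB : HBi R) (a b c d : Fin n) (hab : a ≠ b) (hac : a ≠ c) (had : a ≠ d)
    (hbc : b ≠ c) (hbd : b ≠ d) :
    (R (Fs a b) (Fs c d)) a a + (R (Fs a b) (Fs c d)) b b = 0 := by
  have h := bianchiE R hB a b a b c d a b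
  rw [hsymm (Fs c d) (Fs a b)] at h
  simp only [hab, hab.symm, hac, had, hbc, hbd, hac.symm, had.symm, hbc.symm, hbd.symm,
    if_true, if_false, eq_self_iff_true, ite_true, ite_false,
    sub_zero, zero_sub, add_zero, zero_add] at h
  linear_combination h / 2

/-- Support-pair diagonal relation, equal case. -/
lemma diagEq (hB : HBi R) (a b : Fin n) (hab : a ≠ b) :
    (R (Fs a b) (Fs a b)) a a + (R (Fs a b) (Fs a b)) b b = 0 := by
  have h := bianchiE R hB a b a b a b a b
  simp only [hab, hab.symm, if_true, if_false, eq_self_iff_true, ite_true, ite_false,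
    sub_zero, zero_sub, add_zero, zero_add] at h
  linear_combination h / 3

/-- Share-one-index diagonal relation. -/
lemma diagShare (hsymm : HS R) (hB : HBi R) (a b c g h k : Fin n) (hab : a ≠ b) (hac : a ≠ c) (hbc : b ≠ c)
    (hgh : g ≠ h) (hgk : g ≠ k) (hhk : h ≠ k)
    (hga : g ≠ a) (hgb : g ≠ b) (hgc : g ≠ c)
    (hha : h ≠ a) (hhb : h ≠ b) (hhc : h ≠ c)
    (hka : k ≠ a) (hkb : k ≠ b) (hkc : k ≠ c) :
    (R (Fs a b) (Fs a c)) a a + (R (Fs a b) (Fs a c)) b b + (R (Fs a b) (Fs a c)) c c = 0 := by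
  have p1 := pair_diag R hB a b a c g h hgh hga hgb hga hgc hha hhb hha hhc
  have p2 := pair_diag R hB a b a c g k hgk hga hgb hga hgc hka hkb hka hkc
  have p3 := pair_diag R hB a b a c h k hhk hha hhb hha hhc hka hkb hka hkc
  have hg : (R (Fs a b) (Fs a c)) g g = 0 := by linear_combination (p1 + p2 - p3) / 2
  have h1 := bianchiE R hB a b a b a c a b
  rw [hsymm (Fs a c) (Fs a b)] at h1
  simp only [hab, hab.symm, hac, hac.symm, hbc, hbc.symm,
    if_true, if_false, eq_self_iff_true, ite_true, ite_false,
    sub_zero, zero_sub, add_zero, zero_add] at h1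
  have h2 := bianchiE R hB a b a b c g b g
  rw [hsymm (Fs c g) (Fs a b)] at h2
  simp only [hab, hab.symm, hac, hac.symm, hbc, hbc.symm, hga, hgb, hgc, hga.symm, hgb.symm,
    hgc.symm, if_true, if_false, eq_self_iff_true, ite_true, ite_false,
    sub_zero, zero_sub, add_zero, zero_add] at h2
  have h3 := bianchiE R hB a b a c c g c g
  rw [hsymm (Fs c g) (Fs a b)] at h3
  simp only [hab, hab.symm, hac, hac.symm, hbc, hbc.symm, hga, hgb, hgc, hga.symm, hgb.symm,
    hgc.symm, if_true, if_false, eq_self_iff_true, ite_true, ite_false,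
    sub_zero, zero_sub, add_zero, zero_add] at h3
  linear_combination h1 / 2 - h2 / 2 + h3 - hg

lemma sum_zero_of_pairwise {T : Finset (Fin n)} (hT : 2 ≤ T.card) (d : Fin n → ℂ)
    (h : ∀ i ∈ T, ∀ j ∈ T, i ≠ j → d i + d j = 0) : ∑ i ∈ T, d i = 0 := by
  obtain ⟨e, he, f, hf, hef⟩ := Finset.one_lt_card.mp hT
  have hef0 : d e + d f = 0 := h e he f hf hef
  have key : ∀ i ∈ T \ {e, f}, d i = 0 := by
    intro i hi
    rw [Finset.mem_sdiff, Finset.mem_insert, Finset.mem_singleton] at hi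
    push_neg at hi
    obtain ⟨hiT, hie, hif⟩ := hi
    have h1 := h i hiT e he hie
    have h2 := h i hiT f hf hif
    have : (2 : ℂ) * d i = 0 := by linear_combination h1 + h2 - hef0
    linear_combination this / 2
  have hsub : ({e, f} : Finset (Fin n)) ⊆ T := by
    intro x hx
    rw [Finset.mem_insert, Finset.mem_singleton] at hx
    rcases hx with rfl | rfl <;> assumption
  rw [← Finset.sum_sdiff hsub, Finset.sum_eq_zero key, Finset.sum_pair hef, zero_add, hef0]

lemma card_compl_ge {s : Finset (Fin n)} (hn : 6 ≤ n) (k : ℕ) (hs : s.card ≤ k) (hk : k ≤ 4) :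
    2 ≤ (Finset.univ \ s).card := by
  rw [Finset.card_sdiff_of_subset (Finset.subset_univ s), Finset.card_univ, Fintype.card_fin]
  omega

lemma trace_eq_sum (M : Matrix (Fin n) (Fin n) ℂ) : M.trace = ∑ i, M i i := rfl

lemma trace_split (M : Matrix (Fin n) (Fin n) ℂ) (s : Finset (Fin n)) :
    M.trace = (∑ i ∈ Finset.univ \ s, M i i) + ∑ i ∈ s, M i i := by
  rw [trace_eq_sum, ← Finset.sum_sdiff (Finset.subset_univ s)]

lemma traceDisjoint (hn : 6 ≤ n) (hsymm : HS R) (hB : HBi R) (a b c d : Fin n)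
    (hab : a ≠ b) (hac : a ≠ c) (had : a ≠ d) (hbc : b ≠ c) (hbd : b ≠ d) (hcd : c ≠ d) :
    (R (Fs a b) (Fs c d)).trace = 0 := by
  set A := R (Fs a b) (Fs c d) with hA
  have h1 : A a a + A b b = 0 := diagXX R hsymm hB a b c d hab hac had hbc hbd
  have h2 : A c c + A d d = 0 := by
    have := diagXX R hsymm hB c d a b hcd hac.symm hbc.symm had.symm hbd.symm
    rw [hsymm (Fs c d) (Fs a b)] at this
    exact this
  rw [trace_split A ({a, b, c, d} : Finset (Fin n))]
  have hfresh : ∑ i ∈ Finset.univ \ ({a, b, c, d} : Finset (Fin n)), A i i = 0 := by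
    apply sum_zero_of_pairwise
    · apply card_compl_ge hn 4 _ (le_refl 4)
      apply le_trans (Finset.card_insert_le _ _)
      have := Finset.card_insert_le b ({c, d} : Finset (Fin n))
      have := Finset.card_insert_le c ({d} : Finset (Fin n))
      simp only [Finset.card_singleton] at *
      omega
    · intro i hi j hj hij
      rw [Finset.mem_sdiff, Finset.mem_insert, Finset.mem_insert, Finset.mem_insert,
        Finset.mem_singleton] at hi hj
      push_neg at hi hj
      exact pair_diag R hB a b c d i j hij hi.2.1 hi.2.2.1 hi.2.2.2.1 hi.2.2.2.2
        hj.2.1 hj.2.2.1 hj.2.2.2.1 hj.2.2.2.2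
  rw [hfresh, zero_add]
  rw [Finset.sum_insert (by simp [hab, hac, had]), Finset.sum_insert (by simp [hbc, hbd]),
    Finset.sum_insert (by simp [hcd]), Finset.sum_singleton]
  linear_combination h1 + h2

lemma traceEq (hn : 6 ≤ n) (hB : HBi R) (a b : Fin n) (hab : a ≠ b) :
    (R (Fs a b) (Fs a b)).trace = 0 := by
  set A := R (Fs a b) (Fs a b) with hA
  have h1 : A a a + A b b = 0 := diagEq R hB a b hab
  rw [trace_split A ({a, b} : Finset (Fin n))]
  have hfresh : ∑ i ∈ Finset.univ \ ({a, b} : Finset (Fin n)), A i i = 0 := by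
    apply sum_zero_of_pairwise
    · apply card_compl_ge hn 2
      · apply le_trans (Finset.card_insert_le _ _); simp
      · omega
    · intro i hi j hj hij
      rw [Finset.mem_sdiff, Finset.mem_insert, Finset.mem_singleton] at hi hj
      push_neg at hi hj
      exact pair_diag R hB a b a b i j hij hi.2.1 hi.2.2 hi.2.1 hi.2.2
        hj.2.1 hj.2.2 hj.2.1 hj.2.2
  rw [hfresh, zero_add, Finset.sum_insert (by simp [hab]), Finset.sum_singleton]
  exact h1

lemma traceShare (hn : 6 ≤ n) (hsymm : HS R) (hB : HBi R) (a b c : Fin n)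
    (hab : a ≠ b) (hac : a ≠ c) (hbc : b ≠ c) :
    (R (Fs a b) (Fs a c)).trace = 0 := by
  set A := R (Fs a b) (Fs a c) with hA
  -- find three fresh indices
  have hcard : 2 < (Finset.univ \ ({a, b, c} : Finset (Fin n))).card := by
    rw [Finset.card_sdiff_of_subset (Finset.subset_univ _), Finset.card_univ, Fintype.card_fin]
    have h3 : ({a, b, c} : Finset (Fin n)).card ≤ 3 := by
      apply le_trans (Finset.card_insert_le _ _)
      have := Finset.card_insert_le b ({c} : Finset (Fin n))
      simp only [Finset.card_singleton] at *
      omega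
    omega
  obtain ⟨g, hg, h, hh, k, hk, hgh, hgk, hhk⟩ := Finset.two_lt_card.mp hcard
  rw [Finset.mem_sdiff, Finset.mem_insert, Finset.mem_insert, Finset.mem_singleton] at hg hh hk
  push_neg at hg hh hk
  have h1 : A a a + A b b + A c c = 0 :=
    diagShare R hsymm hB a b c g h k hab hac hbc hgh hgk hhk
      hg.2.1 hg.2.2.1 hg.2.2.2 hh.2.1 hh.2.2.1 hh.2.2.2 hk.2.1 hk.2.2.1 hk.2.2.2
  rw [trace_split A ({a, b, c} : Finset (Fin n))]
  have hfresh : ∑ i ∈ Finset.univ \ ({a, b, c} : Finset (Fin n)), A i i = 0 := by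
    apply sum_zero_of_pairwise
    · exact hcard.le
    · intro i hi j hj hij
      rw [Finset.mem_sdiff, Finset.mem_insert, Finset.mem_insert, Finset.mem_singleton] at hi hj
      push_neg at hi hj
      exact pair_diag R hB a b a c i j hij hi.2.1 hi.2.2.1 hi.2.1 hi.2.2.2
        hj.2.1 hj.2.2.1 hj.2.1 hj.2.2.2
  rw [hfresh, zero_add, Finset.sum_insert (by simp [hab, hac]),
    Finset.sum_insert (by simp [hbc]), Finset.sum_singleton]
  linear_combination h1

lemma traceAll (hn : 6 ≤ n) (hsymm : HS R) (hB : HBi R) (i j k l : Fin n) :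
    (R (Fs i j) (Fs k l)).trace = 0 := by
  by_cases hij : i = j
  · subst hij; rw [Fs_same, map_zero, LinearMap.zero_apply, Matrix.trace_zero]
  by_cases hkl : k = l
  · subst hkl; rw [Fs_same, map_zero, Matrix.trace_zero]
  by_cases hik : i = k
  · subst hik
    by_cases hjl : j = l
    · subst hjl; exact traceEq R hn hB i j hij
    · exact traceShare R hn hsymm hB i j l hij (fun h => hkl h) hjl
  by_cases hil : i = l
  · subst hil
    -- pair (F i j, F k i), k ≠ i
    rw [Fs_swap i k, map_neg, Matrix.trace_neg, neg_eq_zero]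
    by_cases hjk : j = k
    · subst hjk; exact traceEq R hn hB i j hij
    · exact traceShare R hn hsymm hB i j k hij (fun h => hik h) hjk
  by_cases hjk : j = k
  · subst hjk
    -- (F i j, F j l) = (-F j i, F j l)
    rw [Fs_swap j i, map_neg, LinearMap.neg_apply, Matrix.trace_neg, neg_eq_zero]
    exact traceShare R hn hsymm hB j i l (fun h => hij h.symm) hkl hil
  by_cases hjl : j = l
  · subst hjl
    -- (F i j, F k j) = (-F j i, -F j k)
    rw [Fs_swap j i, Fs_swap j k]
    simp only [map_neg, LinearMap.neg_apply, neg_neg]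
    exact traceShare R hn hsymm hB j i k (fun h => hij h.symm) (fun h => hkl h.symm) hik
  · exact traceDisjoint R hn hsymm hB i j k l hij hik hil hjk hjl hkl

lemma skew_expand (S : skewMat n) :
    S = ∑ i : Fin n, ∑ j : Fin n, (((S : Matrix (Fin n) (Fin n) ℂ) i j) / 2) • Fs i j := by
  apply Subtype.ext
  push_cast
  have hS : (S : Matrix (Fin n) (Fin n) ℂ)ᵀ = -(S : Matrix (Fin n) (Fin n) ℂ) := S.2
  ext p q
  have hqp : (S : Matrix (Fin n) (Fin n) ℂ) q p = -((S : Matrix (Fin n) (Fin n) ℂ) p q) := by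
    have := congrFun (congrFun hS p) q
    simpa [Matrix.transpose_apply] using this
  simp only [Matrix.sum_apply, Matrix.smul_apply, Fs_coe, smul_eq_mul]
  have hFm : ∀ u v : Fin n, Fm u v p q =
      (if u = p ∧ v = q then (1:ℂ) else 0) - (if v = p ∧ u = q then 1 else 0) := by
    intro u v
    simp [Fm, Matrix.single]
  simp only [hFm, mul_sub, Finset.sum_sub_distrib, mul_ite, mul_one, mul_zero]
  simp only [ite_and, Finset.sum_ite_irrel, Finset.sum_const_zero, Finset.sum_ite_eq,
    Finset.sum_ite_eq', Finset.mem_univ, if_true, hqp]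
  ring

theorem stmt7' (hn : 6 ≤ n) (hsymm : HS R) (hB : HBi R) :
    ∀ X Y : skewMat n, (R X Y).trace = 0 := by
  intro X Y
  rw [skew_expand X, skew_expand Y]
  rw [map_sum]
  simp only [LinearMap.sum_apply, map_sum, LinearMap.smul_apply, _root_.map_smul,
    Matrix.trace_sum, Matrix.trace_smul, traceAll R hn hsymm hB, smul_zero,
    Finset.sum_const_zero]

end main

/-- for `n ≥ 6`, any skew-curvature tensor for the natural action of
`gl(n,ℂ)` on `Λ²ℂⁿ` (skew-symmetric matrices, `ρ(A)S = AS + SAᵀ`) is traceless,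
i.e. `𝓡̄(gl(n,ℂ)) = 𝓡̄(sl(n,ℂ))` for this representation. -/
theorem stmt7 (n : ℕ) (hn : 6 ≤ n)
    (R : skewMat n →ₗ[ℂ] skewMat n →ₗ[ℂ] Matrix (Fin n) (Fin n) ℂ)
    (hsymm : ∀ X Y : skewMat n, R X Y = R Y X)
    (hBianchi : ∀ X Y Z : skewMat n,
      (R X Y * (Z : Matrix (Fin n) (Fin n) ℂ) + (Z : Matrix (Fin n) (Fin n) ℂ) * (R X Y)ᵀ)
      + (R Y Z * (X : Matrix (Fin n) (Fin n) ℂ) + (X : Matrix (Fin n) (Fin n) ℂ) * (R Y Z)ᵀ)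
      + (R Z X * (Y : Matrix (Fin n) (Fin n) ℂ) + (Y : Matrix (Fin n) (Fin n) ℂ) * (R Z X)ᵀ)
      = 0) :
    ∀ X Y : skewMat n, (R X Y).trace = 0 := by
  exact stmt7' R hn hsymm hBianchi
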